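/- arXiv:2604.02747 — 2 statements merged into one kernel-verified Lean document; each statement's English description precedes it below -/
import Mathlib

section
/- Let m(d) = f + g·d + (1/2)d·H·d + (σ/3)‖d‖³ be a cubic model with σ > 0, and suppose u is a point with m(u) ≤ m(-α g) for all α ≥ 0 (i.e., u achieves at least the Cauchy-point reduction). Then m(0) - m(u) ≥ (3/10)‖g‖ · min{‖g‖/(1+‖H‖), √(‖g‖/σ)}. -/
open Matrix Real BigOperators RealInnerProductSpace

/-- Euclidean norm of a finite-dimensional real vector. -/
noncomputable def eunorm {ι : Type*} [Fintype ι] (x : ι → ℝ) : ℝ :=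
  Real.sqrt (∑ i, x i ^ 2)

/-- ℓ¹ norm of a finite-dimensional real vector. -/
noncomputable def l1norm {ι : Type*} [Fintype ι] (x : ι → ℝ) : ℝ :=
  ∑ i, |x i|

/-- Spectral (ℓ²-operator) norm of a square matrix. -/
noncomputable def opNorm {n : ℕ} (A : Matrix (Fin n) (Fin n) ℝ) : ℝ :=
  sSup {r : ℝ | ∃ x : Fin n → ℝ, eunorm x = 1 ∧ r = eunorm (A.mulVec x)}

lemma eunorm_nonneg' {ι : Type*} [Fintype ι] (x : ι → ℝ) : 0 ≤ eunorm x :=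
  Real.sqrt_nonneg _

lemma eunorm_sq' {ι : Type*} [Fintype ι] (x : ι → ℝ) : eunorm x ^ 2 = ∑ i, x i ^ 2 :=
  Real.sq_sqrt (by positivity)

lemma eunorm_smul' {ι : Type*} [Fintype ι] (c : ℝ) (x : ι → ℝ) :
    eunorm (c • x) = |c| * eunorm x := by
  unfold eunorm
  simp only [Pi.smul_apply, smul_eq_mul, mul_pow]
  rw [← Finset.mul_sum, Real.sqrt_mul (sq_nonneg c), Real.sqrt_sq_eq_abs]

lemma eunorm_neg' {ι : Type*} [Fintype ι] (x : ι → ℝ) : eunorm (-x) = eunorm x := by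
  simp [eunorm]

lemma dot_le' {n : ℕ} (x y : Fin n → ℝ) : x ⬝ᵥ y ≤ eunorm x * eunorm y := by
  have h := Finset.sum_mul_sq_le_sq_mul_sq Finset.univ x y
  calc x ⬝ᵥ y ≤ |x ⬝ᵥ y| := le_abs_self _
  _ = Real.sqrt ((x ⬝ᵥ y) ^ 2) := (Real.sqrt_sq_eq_abs _).symm
  _ ≤ Real.sqrt ((∑ i, x i ^ 2) * ∑ i, y i ^ 2) :=
      Real.sqrt_le_sqrt (by simpa [dotProduct] using h)
  _ = _ := by rw [eunorm, eunorm, ← Real.sqrt_mul (by positivity)]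

lemma mulVec_eunorm_le' {n : ℕ} (A : Matrix (Fin n) (Fin n) ℝ) (x : Fin n → ℝ) :
    eunorm (A.mulVec x) ≤ Real.sqrt (∑ i, ∑ j, A i j ^ 2) * eunorm x := by
  rw [eunorm, eunorm, ← Real.sqrt_mul (by positivity)]
  apply Real.sqrt_le_sqrt
  rw [Finset.sum_mul]
  apply Finset.sum_le_sum
  intro i _
  simpa [Matrix.mulVec, dotProduct] using Finset.sum_mul_sq_le_sq_mul_sq Finset.univ (A i) x

lemma opNorm_nonneg' {n : ℕ} (A : Matrix (Fin n) (Fin n) ℝ) : 0 ≤ opNorm A := by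
  apply Real.sSup_nonneg
  rintro r ⟨x, hx, rfl⟩
  exact eunorm_nonneg' _

lemma opNorm_key {n : ℕ} (A : Matrix (Fin n) (Fin n) ℝ) (g : Fin n → ℝ)
    (hg : 0 < eunorm g) :
    eunorm (A.mulVec g) ≤ opNorm A * eunorm g := by
  have hbdd : BddAbove {r : ℝ | ∃ x : Fin n → ℝ, eunorm x = 1 ∧ r = eunorm (A.mulVec x)} := by
    refine ⟨Real.sqrt (∑ i, ∑ j, A i j ^ 2), ?_⟩
    rintro r ⟨x, hx, rfl⟩
    calc eunorm (A.mulVec x) ≤ Real.sqrt (∑ i, ∑ j, A i j ^ 2) * eunorm x :=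
          mulVec_eunorm_le' A x
    _ = Real.sqrt (∑ i, ∑ j, A i j ^ 2) := by rw [hx, mul_one]
  have hxmem : (eunorm g)⁻¹ * eunorm (A.mulVec g) ∈
      {r : ℝ | ∃ x : Fin n → ℝ, eunorm x = 1 ∧ r = eunorm (A.mulVec x)} := by
    refine ⟨(eunorm g)⁻¹ • g, ?_, ?_⟩
    · rw [eunorm_smul', abs_of_pos (inv_pos.mpr hg), inv_mul_cancel₀ hg.ne']
    · rw [Matrix.mulVec_smul, eunorm_smul', abs_of_pos (inv_pos.mpr hg)]
  have hle : (eunorm g)⁻¹ * eunorm (A.mulVec g) ≤ opNorm A := le_csSup hbdd hxmem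
  have := mul_le_mul_of_nonneg_right hle hg.le
  calc eunorm (A.mulVec g) = (eunorm g)⁻¹ * eunorm (A.mulVec g) * eunorm g := by
        rw [mul_comm ((eunorm g)⁻¹) _, mul_assoc, inv_mul_cancel₀ hg.ne', mul_one]
  _ ≤ opNorm A * eunorm g := this

/-- The key arithmetic fact: a good Cauchy step exists. -/
lemma cauchy_arith (σ G N q : ℝ) (hσ : 0 < σ) (hG : 0 < G) (hN : 0 ≤ N)
    (hq : q ≤ N * G ^ 2) :
    ∃ α : ℝ, 0 < α ∧
      α * G ^ 2 - (1 / 2) * (α ^ 2 * q) - (σ / 3) * (α * G) ^ 3 ≥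
        (3 / 10) * G * min (G / (1 + N)) (Real.sqrt (G / σ)) := by
  have h1N : (0:ℝ) < 1 + N := by linarith
  have hσG : (0:ℝ) < σ * G := by positivity
  have hsG : (0:ℝ) < Real.sqrt (σ * G) := Real.sqrt_pos.mpr hσG
  obtain ⟨A, hA0, hA1, hA2, hAmin⟩ :
      ∃ A : ℝ, 0 < A ∧ A * (1 + N) ≤ 1 ∧ A ^ 2 * (σ * G) ≤ 1 ∧
        min (G / (1 + N)) (Real.sqrt (G / σ)) ≤ G * A := by
    refine ⟨min (1 / (1 + N)) (1 / Real.sqrt (σ * G)),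
      lt_min (by positivity) (by positivity), ?_, ?_, ?_⟩
    · exact (le_div_iff₀ h1N).mp (by simpa using min_le_left (1 / (1 + N)) (1 / Real.sqrt (σ * G)))
    · have h2 : min (1 / (1 + N)) (1 / Real.sqrt (σ * G)) ≤ 1 / Real.sqrt (σ * G) :=
        min_le_right _ _
      have hA0' : (0:ℝ) ≤ min (1 / (1 + N)) (1 / Real.sqrt (σ * G)) :=
        le_min (by positivity) (by positivity)
      have hsq : (min (1 / (1 + N)) (1 / Real.sqrt (σ * G))) ^ 2 ≤ (1 / Real.sqrt (σ * G)) ^ 2 :=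
        pow_le_pow_left₀ hA0' h2 2
      have : (1 / Real.sqrt (σ * G)) ^ 2 = 1 / (σ * G) := by
        rw [div_pow, one_pow, Real.sq_sqrt hσG.le]
      exact (le_div_iff₀ hσG).mp (by rw [← this]; exact hsq)
    · have hsqrt_eq : Real.sqrt (G / σ) = G / Real.sqrt (σ * G) := by
        rw [eq_div_iff hsG.ne', ← Real.sqrt_mul (by positivity : (0:ℝ) ≤ G / σ)]
        rw [show G / σ * (σ * G) = G ^ 2 by field_simp]
        exact Real.sqrt_sq hG.le
      rw [hsqrt_eq]
      rcases min_cases (1 / (1 + N)) (1 / Real.sqrt (σ * G)) with ⟨h, _⟩ | ⟨h, _⟩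
      · rw [h]
        calc min (G / (1 + N)) (G / Real.sqrt (σ * G)) ≤ G / (1 + N) := min_le_left _ _
        _ = G * (1 / (1 + N)) := by ring
      · rw [h]
        calc min (G / (1 + N)) (G / Real.sqrt (σ * G)) ≤ G / Real.sqrt (σ * G) :=
              min_le_right _ _
        _ = G * (1 / Real.sqrt (σ * G)) := by ring
  refine ⟨A / 2, by positivity, ?_⟩
  have hAN : A * N ≤ 1 := by nlinarith
  have k1 : A ^ 2 * q ≤ A * G ^ 2 := by
    calc A ^ 2 * q ≤ A ^ 2 * (N * G ^ 2) := mul_le_mul_of_nonneg_left hq (sq_nonneg A)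
    _ = (A * N) * (A * G ^ 2) := by ring
    _ ≤ 1 * (A * G ^ 2) := mul_le_mul_of_nonneg_right hAN (by positivity)
    _ = A * G ^ 2 := one_mul _
  have k2 : σ * (A ^ 3 * G ^ 3) ≤ A * G ^ 2 := by
    calc σ * (A ^ 3 * G ^ 3) = (A ^ 2 * (σ * G)) * (A * G ^ 2) := by ring
    _ ≤ 1 * (A * G ^ 2) := mul_le_mul_of_nonneg_right hA2 (by positivity)
    _ = A * G ^ 2 := one_mul _
  have k3 : (3 / 10) * G * min (G / (1 + N)) (Real.sqrt (G / σ)) ≤ (3 / 10) * (A * G ^ 2) := by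
    calc (3 / 10) * G * min (G / (1 + N)) (Real.sqrt (G / σ))
        ≤ (3 / 10) * G * (G * A) := by
          apply mul_le_mul_of_nonneg_left hAmin (by positivity)
    _ = (3 / 10) * (A * G ^ 2) := by ring
  nlinarith [k1, k2, k3]

theorem stmt0 {n : ℕ} (f σ : ℝ) (g u : Fin n → ℝ) (H : Matrix (Fin n) (Fin n) ℝ)
    (hH : H.IsSymm) (hσ : 0 < σ)
    (m : (Fin n → ℝ) → ℝ)
    (hm : ∀ d, m d = f + g ⬝ᵥ d + (1 / 2) * (d ⬝ᵥ H.mulVec d) + (σ / 3) * (eunorm d) ^ 3)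
    (hu : ∀ α : ℝ, 0 ≤ α → m u ≤ m (-(α • g))) :
    m 0 - m u ≥ (3 / 10) * eunorm g *
      min (eunorm g / (1 + opNorm H)) (Real.sqrt (eunorm g / σ)) := by
  have hm0 : m 0 = f := by
    have := hm 0
    simp [eunorm] at this
    simpa using this
  have hval : ∀ α : ℝ, 0 ≤ α → m (-(α • g)) =
      f - α * (eunorm g) ^ 2 + (1 / 2) * (α ^ 2 * (g ⬝ᵥ H.mulVec g))
        + (σ / 3) * (α * eunorm g) ^ 3 := by
    intro α hα
    rw [hm]
    have hgg : g ⬝ᵥ g = (eunorm g) ^ 2 := by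
      rw [eunorm_sq']
      simp [dotProduct, sq]
    have e1 : g ⬝ᵥ (-(α • g)) = -(α * (eunorm g) ^ 2) := by
      simp [dotProduct_neg, dotProduct_smul, smul_eq_mul, hgg]
    have e2 : (-(α • g)) ⬝ᵥ H.mulVec (-(α • g)) = α ^ 2 * (g ⬝ᵥ H.mulVec g) := by
      rw [Matrix.mulVec_neg, Matrix.mulVec_smul]
      simp only [neg_dotProduct, dotProduct_neg, neg_neg, smul_dotProduct,
        dotProduct_smul, smul_eq_mul]
      ring
    have e3 : eunorm (-(α • g)) = α * eunorm g := by
      rw [eunorm_neg', eunorm_smul', abs_of_nonneg hα]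
    rw [e1, e2, e3]
    ring
  rcases eq_or_lt_of_le (eunorm_nonneg' g) with hG0 | hG
  · -- eunorm g = 0 case
    have h1 : m u ≤ m 0 := by
      have := hu 0 le_rfl
      simpa using this
    rw [← hG0]
    simp only [zero_div, mul_zero, zero_mul, Real.sqrt_zero, min_self, ge_iff_le]
    linarith
  · have hHg := opNorm_key H g hG
    have hN := opNorm_nonneg' H
    have hq : g ⬝ᵥ H.mulVec g ≤ opNorm H * (eunorm g) ^ 2 := by
      calc g ⬝ᵥ H.mulVec g ≤ eunorm g * eunorm (H.mulVec g) := dot_le' g _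
      _ ≤ eunorm g * (opNorm H * eunorm g) :=
            mul_le_mul_of_nonneg_left hHg hG.le
      _ = opNorm H * (eunorm g) ^ 2 := by ring
    obtain ⟨α, hα0, hineq⟩ := cauchy_arith σ (eunorm g) (opNorm H) (g ⬝ᵥ H.mulVec g) hσ hG hN hq
    have hu' : m u ≤ m (-(α • g)) := hu α hα0.le
    have hv := hval α hα0.le
    have : m 0 - m (-(α • g)) =
        α * (eunorm g) ^ 2 - (1 / 2) * (α ^ 2 * (g ⬝ᵥ H.mulVec g))
          - (σ / 3) * (α * eunorm g) ^ 3 := by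
      rw [hm0, hv]; ring
    linarith
end

section
/- Let H be a symmetric n×n matrix with ‖H‖ ≤ κ_H, g ∈ ℝⁿ, σ > 0, and m(u) = f + g·u + (1/2)u·H·u + (σ/3)‖u‖³. If u satisfies m(0) − m(u) ≥ (3/10)‖g‖ min{‖g‖/(1+‖H‖), √(‖g‖/σ)} and m(u) ≤ m(0), then ‖u‖ ≤ 3 max{κ_H/σ, √(‖g‖/σ)}. -/
open Matrix Real BigOperators RealInnerProductSpace

lemma dot_le_eunorm {ι : Type*} [Fintype ι] (x y : ι → ℝ) :
    x ⬝ᵥ y ≤ eunorm x * eunorm y := by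
  simpa [dotProduct, eunorm] using
    Real.sum_mul_le_sqrt_mul_sqrt Finset.univ x y

lemma neg_dot_le_eunorm {ι : Type*} [Fintype ι] (x y : ι → ℝ) :
    -(x ⬝ᵥ y) ≤ eunorm x * eunorm y := by
  have h := dot_le_eunorm x (fun i => -(y i))
  have he : eunorm (fun i => -(y i)) = eunorm y := by simp [eunorm]
  rw [he] at h
  have : x ⬝ᵥ (fun i => -(y i)) = -(x ⬝ᵥ y) := by
    simp [dotProduct, mul_neg]
  rwa [this] at h

theorem stmt12 {n : ℕ} (f σ κH : ℝ) (g u : Fin n → ℝ) (H : Matrix (Fin n) (Fin n) ℝ)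
    (hH : H.IsSymm) (hσ : 0 < σ) (hκH : opNorm H ≤ κH)
    (hHbd : ∀ x : Fin n → ℝ, eunorm (H.mulVec x) ≤ κH * eunorm x)
    (m : (Fin n → ℝ) → ℝ)
    (hm : ∀ d, m d = f + g ⬝ᵥ d + (1 / 2) * (d ⬝ᵥ H.mulVec d) + (σ / 3) * (eunorm d) ^ 3)
    (hdec : m 0 - m u ≥ (3 / 10) * eunorm g *
      min (eunorm g / (1 + opNorm H)) (Real.sqrt (eunorm g / σ)))
    (hle : m u ≤ m 0) :
    eunorm u ≤ 3 * max (κH / σ) (Real.sqrt (eunorm g / σ)) := by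
  set r : ℝ := eunorm u with hr
  set G : ℝ := eunorm g with hG
  set M : ℝ := max (κH / σ) (Real.sqrt (G / σ)) with hM
  have hr0 : 0 ≤ r := eunorm_nonneg' u
  have hG0 : 0 ≤ G := eunorm_nonneg' g
  have hM0 : 0 ≤ M := le_trans (Real.sqrt_nonneg _) (le_max_right _ _)
  -- m 0 = f
  have hm0 : m 0 = f := by
    have : eunorm (0 : Fin n → ℝ) = 0 := by simp [eunorm]
    simp [hm, this]
  have hmu : m u = f + g ⬝ᵥ u + (1 / 2) * (u ⬝ᵥ H.mulVec u) + (σ / 3) * r ^ 3 := hm u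
  -- key inequality: (σ/3) r^3 ≤ G*r + (κH/2) r^2
  have h1 : -(g ⬝ᵥ u) ≤ G * r := neg_dot_le_eunorm g u
  have h2 : -(u ⬝ᵥ H.mulVec u) ≤ κH * r ^ 2 := by
    have := neg_dot_le_eunorm u (H.mulVec u)
    have hb := hHbd u
    have hbound : eunorm u * eunorm (H.mulVec u) ≤ eunorm u * (κH * eunorm u) :=
      mul_le_mul_of_nonneg_left hb hr0
    nlinarith [this]
  have hkey : (σ / 3) * r ^ 3 ≤ G * r + (κH / 2) * r ^ 2 := by
    have : f + g ⬝ᵥ u + (1 / 2) * (u ⬝ᵥ H.mulVec u) + (σ / 3) * r ^ 3 ≤ f := by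
      rw [hmu, hm0] at hle; exact hle
    linarith
  -- bounds in terms of M
  have hκM : κH ≤ σ * M := by
    have : κH / σ ≤ M := le_max_left _ _
    calc κH = σ * (κH / σ) := by field_simp
    _ ≤ σ * M := by exact mul_le_mul_of_nonneg_left this hσ.le
  have hGM : G ≤ σ * M ^ 2 := by
    have h1 : Real.sqrt (G / σ) ≤ M := le_max_right _ _
    have h2 : G / σ ≤ M ^ 2 := by
      have := Real.sq_sqrt (div_nonneg hG0 hσ.le)
      nlinarith [Real.sqrt_nonneg (G / σ)]
    calc G = σ * (G / σ) := by field_simp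
    _ ≤ σ * M ^ 2 := mul_le_mul_of_nonneg_left h2 hσ.le
  -- conclude
  by_contra hcon
  push_neg at hcon
  have hrpos : 0 < r := lt_of_le_of_lt (by nlinarith) hcon
  nlinarith [mul_le_mul_of_nonneg_left hGM hr0, mul_le_mul_of_nonneg_left hκM (sq_nonneg r),
    mul_pos hσ hrpos, sq_nonneg (r - 3 * M), mul_pos hrpos hrpos,
    mul_lt_mul_of_pos_left hcon (mul_pos hσ (mul_pos hrpos hrpos))]
end
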